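/- Let 0 < p < 1 and let q satisfy 1/p + 1/q = 1 (so q < 0), let σ ∈ ℝ, and let h and f be nonnegative Lebesgue-measurable functions on (0,∞) such that k(σ) := ∫₀^∞ h(t) t^{σ-1} dt satisfies 0 < k(σ) < ∞. Then ∫₀^∞ y^{pσ-1} (∫₀^∞ h(x·y) f(x) dx)^p dy ≥ k(σ)^p · ∫₀^∞ x^{p(1-σ)-1} f(x)^p dx. -/

import Mathlib

open MeasureTheory Set
open scoped ENNReal

private lemma lint_scale (g : ℝ → ℝ≥0∞) (hg : Measurable g) {a : ℝ} (ha : 0 < a) :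
    ∫⁻ t in Ioi (0:ℝ), g (a * t) = ENNReal.ofReal a⁻¹ * ∫⁻ t in Ioi (0:ℝ), g t := by
  have hpre : (fun t : ℝ => a * t) ⁻¹' Ioi 0 = Ioi 0 := by
    ext t
    simp only [mem_preimage, mem_Ioi]
    constructor
    · intro h'
      by_contra hne
      push_neg at hne
      nlinarith
    · exact fun h' => mul_pos ha h'
  have hmap : Measure.map (fun t : ℝ => a * t) (volume.restrict (Ioi 0))
      = ENNReal.ofReal a⁻¹ • volume.restrict (Ioi (0:ℝ)) := by
    rw [← hpre, ← Measure.restrict_map (measurable_const_mul a) measurableSet_Ioi,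
      Real.map_volume_mul_left ha.ne', Measure.restrict_smul, hpre,
      abs_of_pos (inv_pos.mpr ha)]
  rw [← lintegral_map hg (measurable_const_mul a), hmap, lintegral_smul_measure, smul_eq_mul]

private lemma lint_scale_rpow (h : ℝ → ℝ) (hh : Measurable h)
    (hh0 : ∀ t ∈ Ioi (0:ℝ), 0 ≤ h t) (σ : ℝ) {a : ℝ} (ha : 0 < a) :
    ∫⁻ t in Ioi (0:ℝ), ENNReal.ofReal (h (a * t) * t ^ (σ - 1))
      = ENNReal.ofReal (a ^ (-σ)) * ∫⁻ t in Ioi (0:ℝ), ENNReal.ofReal (h t * t ^ (σ - 1)) := by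
  have hcong : ∀ᵐ t ∂(volume : Measure ℝ), t ∈ Ioi (0:ℝ) →
      ENNReal.ofReal (h (a * t) * t ^ (σ - 1))
        = ENNReal.ofReal (a ^ (1 - σ)) * ENNReal.ofReal (h (a * t) * (a * t) ^ (σ - 1)) := by
    refine Filter.Eventually.of_forall (fun t ht => ?_)
    rw [← ENNReal.ofReal_mul (Real.rpow_nonneg ha.le _)]
    congr 1
    have h1 : (a * t) ^ (σ - 1) = a ^ (σ - 1) * t ^ (σ - 1) :=
      Real.mul_rpow ha.le (le_of_lt ht)
    have h2 : a ^ (1 - σ) * a ^ (σ - 1) = 1 := by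
      rw [← Real.rpow_add ha]
      norm_num
    calc h (a * t) * t ^ (σ - 1)
        = (a ^ (1 - σ) * a ^ (σ - 1)) * (h (a * t) * t ^ (σ - 1)) := by rw [h2, one_mul]
      _ = a ^ (1 - σ) * (h (a * t) * (a ^ (σ - 1) * t ^ (σ - 1))) := by ring
      _ = a ^ (1 - σ) * (h (a * t) * (a * t) ^ (σ - 1)) := by rw [h1]
  rw [setLIntegral_congr_fun_ae measurableSet_Ioi hcong,
    lintegral_const_mul' _ _ ENNReal.ofReal_ne_top,
    lint_scale (fun u => ENNReal.ofReal (h u * u ^ (σ - 1)))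
      ((hh.mul (measurable_id.pow measurable_const)).ennreal_ofReal) ha,
    ← mul_assoc, ← ENNReal.ofReal_mul (Real.rpow_nonneg ha.le _)]
  congr 2
  rw [← Real.rpow_neg_one a, ← Real.rpow_add ha]
  ring_nf

private lemma step1 (p σ : ℝ) (hp0 : 0 < p) (hp1 : p < 1)
    (h f : ℝ → ℝ) (hh : Measurable h) (hf : Measurable f)
    (hh0 : ∀ t ∈ Ioi (0:ℝ), 0 ≤ h t) (hf0 : ∀ t ∈ Ioi (0:ℝ), 0 ≤ f t)
    {y : ℝ} (hy : 0 < y) :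
    ∫⁻ x in Ioi (0:ℝ),
        ENNReal.ofReal (h (x*y) * f x ^ p * (x*y) ^ ((1-p)*(σ-1)) * y ^ (1-p))
      ≤ (∫⁻ x in Ioi (0:ℝ), ENNReal.ofReal (h (x*y) * f x)) ^ p *
        (∫⁻ t in Ioi (0:ℝ), ENNReal.ofReal (h t * t ^ (σ - 1))) ^ (1-p) := by
  have h1p : (0:ℝ) < 1 - p := by linarith
  set u : ℝ → ℝ≥0∞ := fun x => ENNReal.ofReal (h (x*y) * (x*y) ^ (σ-1) * y) with hu_def
  set v : ℝ → ℝ≥0∞ := fun x => ENNReal.ofReal (f x * (x*y) ^ (1-σ) * y⁻¹) with hv_def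
  have hu : Measurable u :=
    (((hh.comp (measurable_id.mul_const y)).mul
      ((measurable_id.mul_const y).pow measurable_const)).mul_const y).ennreal_ofReal
  have hv : Measurable v :=
    ((hf.mul ((measurable_id.mul_const y).pow measurable_const)).mul_const y⁻¹).ennreal_ofReal
  -- pointwise facts on Ioi 0
  have hb : ∀ x ∈ Ioi (0:ℝ), u x * v x = ENNReal.ofReal (h (x*y) * f x) := by
    intro x hx
    have hx : (0:ℝ) < x := hx
    have hxy : (0:ℝ) < x * y := mul_pos hx hy
    have hH : 0 ≤ h (x*y) := hh0 _ hxy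
    show ENNReal.ofReal (h (x*y) * (x*y) ^ (σ-1) * y) *
        ENNReal.ofReal (f x * (x*y) ^ (1-σ) * y⁻¹) = _
    rw [← ENNReal.ofReal_mul (mul_nonneg (mul_nonneg hH (Real.rpow_nonneg hxy.le _)) hy.le)]
    congr 1
    have hpow : (x*y) ^ (σ-1) * (x*y) ^ (1-σ) = 1 := by
      rw [← Real.rpow_add hxy]; norm_num
    calc h (x*y) * (x*y) ^ (σ-1) * y * (f x * (x*y) ^ (1-σ) * y⁻¹)
        = h (x*y) * f x * ((x*y) ^ (σ-1) * (x*y) ^ (1-σ)) * (y * y⁻¹) := by ring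
      _ = h (x*y) * f x := by rw [hpow, mul_inv_cancel₀ hy.ne']; ring
  have hc : ∀ x ∈ Ioi (0:ℝ),
      ENNReal.ofReal (h (x*y) * f x ^ p * (x*y) ^ ((1-p)*(σ-1)) * y ^ (1-p))
        = (u x * v x) ^ p * u x ^ (1-p) := by
    intro x hx
    have hx : (0:ℝ) < x := hx
    have hxy : (0:ℝ) < x * y := mul_pos hx hy
    have hH : 0 ≤ h (x*y) := hh0 _ hxy
    have hF : 0 ≤ f x := hf0 x hx
    rw [hb x hx]
    show _ = (ENNReal.ofReal (h (x*y) * f x)) ^ p *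
        (ENNReal.ofReal (h (x*y) * (x*y) ^ (σ-1) * y)) ^ (1-p)
    rw [ENNReal.ofReal_rpow_of_nonneg (mul_nonneg hH hF) hp0.le,
      ENNReal.ofReal_rpow_of_nonneg
        (mul_nonneg (mul_nonneg hH (Real.rpow_nonneg hxy.le _)) hy.le) h1p.le,
      ← ENNReal.ofReal_mul (Real.rpow_nonneg (mul_nonneg hH hF) _)]
    congr 1
    rcases eq_or_lt_of_le hH with hH0 | hH0
    · rw [← hH0]
      simp [Real.zero_rpow hp0.ne', Real.zero_rpow h1p.ne']
    · rw [Real.mul_rpow hH0.le hF,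
        Real.mul_rpow (mul_nonneg hH0.le (Real.rpow_nonneg hxy.le _)) hy.le,
        Real.mul_rpow hH0.le (Real.rpow_nonneg hxy.le _), ← Real.rpow_mul hxy.le,
        show (σ-1)*(1-p) = (1-p)*(σ-1) from mul_comm _ _]
      have hh2 : h (x*y) ^ p * h (x*y) ^ (1-p) = h (x*y) := by
        rw [← Real.rpow_add hH0]; norm_num
      symm
      calc h (x*y) ^ p * f x ^ p *
            (h (x*y) ^ (1-p) * (x*y) ^ ((1-p)*(σ-1)) * y ^ (1-p))
          = h (x*y) ^ p * h (x*y) ^ (1-p) *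
              (f x ^ p * (x*y) ^ ((1-p)*(σ-1)) * y ^ (1-p)) := by ring
        _ = h (x*y) * f x ^ p * (x*y) ^ ((1-p)*(σ-1)) * y ^ (1-p) := by rw [hh2]; ring
  have ha : ∫⁻ x in Ioi (0:ℝ), u x
      = ∫⁻ t in Ioi (0:ℝ), ENNReal.ofReal (h t * t ^ (σ - 1)) := by
    have hcg : ∀ᵐ x ∂(volume : Measure ℝ), x ∈ Ioi (0:ℝ) →
        u x = ENNReal.ofReal y * ENNReal.ofReal (h (y*x) * (y*x) ^ (σ-1)) := by
      refine Filter.Eventually.of_forall (fun x hx => ?_)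
      show ENNReal.ofReal (h (x*y) * (x*y) ^ (σ-1) * y) = _
      rw [← ENNReal.ofReal_mul hy.le]
      congr 1
      rw [mul_comm x y]; ring
    rw [setLIntegral_congr_fun_ae measurableSet_Ioi hcg,
      lintegral_const_mul' _ _ ENNReal.ofReal_ne_top,
      lint_scale (fun t => ENNReal.ofReal (h t * t ^ (σ-1)))
        ((hh.mul (measurable_id.pow measurable_const)).ennreal_ofReal) hy,
      ← mul_assoc, ← ENNReal.ofReal_mul hy.le, mul_inv_cancel₀ hy.ne',
      ENNReal.ofReal_one, one_mul]
  have hPQ : Real.HolderConjugate (1/p) (1/(1-p)) :=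
    Real.holderConjugate_one_div hp0 h1p (by ring)
  have holder := ENNReal.lintegral_mul_le_Lp_mul_Lq (volume.restrict (Ioi 0)) hPQ
    (f := fun x => (u x * v x) ^ p) (g := fun x => u x ^ (1-p))
    (((hu.mul hv).pow measurable_const).aemeasurable)
    ((hu.pow measurable_const).aemeasurable)
  have e1 : p * (1/p) = 1 := by field_simp
  have e2 : (1-p) * (1/(1-p)) = 1 := by field_simp
  simp only [Pi.mul_apply, ← ENNReal.rpow_mul, e1, e2, one_div_one_div,
    ENNReal.rpow_one] at holder
  calc ∫⁻ x in Ioi (0:ℝ),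
        ENNReal.ofReal (h (x*y) * f x ^ p * (x*y) ^ ((1-p)*(σ-1)) * y ^ (1-p))
      = ∫⁻ x in Ioi (0:ℝ), (u x * v x) ^ p * u x ^ (1-p) :=
        setLIntegral_congr_fun_ae measurableSet_Ioi (Filter.Eventually.of_forall hc)
    _ ≤ (∫⁻ x in Ioi (0:ℝ), u x * v x) ^ p * (∫⁻ x in Ioi (0:ℝ), u x) ^ (1-p) := holder
    _ = (∫⁻ x in Ioi (0:ℝ), ENNReal.ofReal (h (x*y) * f x)) ^ p *
        (∫⁻ t in Ioi (0:ℝ), ENNReal.ofReal (h t * t ^ (σ - 1))) ^ (1-p) := by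
        rw [setLIntegral_congr_fun_ae measurableSet_Ioi (Filter.Eventually.of_forall hb), ha]

theorem stmt1 (p q σ : ℝ) (hp0 : 0 < p) (hp1 : p < 1) (hpq : 1 / p + 1 / q = 1)
    (h f : ℝ → ℝ) (hh : Measurable h) (hf : Measurable f)
    (hh0 : ∀ t ∈ Ioi (0 : ℝ), 0 ≤ h t) (hf0 : ∀ t ∈ Ioi (0 : ℝ), 0 ≤ f t)
    (hk0 : 0 < ∫⁻ t in Ioi (0 : ℝ), ENNReal.ofReal (h t * t ^ (σ - 1)))
    (hk1 : (∫⁻ t in Ioi (0 : ℝ), ENNReal.ofReal (h t * t ^ (σ - 1))) < ⊤) :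
    (∫⁻ t in Ioi (0 : ℝ), ENNReal.ofReal (h t * t ^ (σ - 1))) ^ p *
        (∫⁻ x in Ioi (0 : ℝ), ENNReal.ofReal (x ^ (p * (1 - σ) - 1) * f x ^ p))
      ≤ ∫⁻ y in Ioi (0 : ℝ),
          ENNReal.ofReal (y ^ (p * σ - 1)) *
            (∫⁻ x in Ioi (0 : ℝ), ENNReal.ofReal (h (x * y) * f x)) ^ p := by
  have h1p : (0:ℝ) < 1 - p := by linarith
  set K := ∫⁻ t in Ioi (0:ℝ), ENNReal.ofReal (h t * t ^ (σ - 1)) with hK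
  have hKne0 : K ≠ 0 := hk0.ne'
  have hKtop : K ≠ ⊤ := hk1.ne
  have hKp1top : K ^ (p-1) ≠ ⊤ := by
    simp [ENNReal.rpow_eq_top_iff, hKne0, hKtop]
  -- the double-integral integrand
  set G : ℝ → ℝ → ℝ≥0∞ := fun y x =>
    ENNReal.ofReal (y ^ (p*σ-1)) *
      ENNReal.ofReal (h (x*y) * f x ^ p * (x*y) ^ ((1-p)*(σ-1)) * y ^ (1-p)) with hG
  have hGmeas : Measurable (Function.uncurry G) := by
    refine Measurable.mul (f := fun z : ℝ × ℝ => ENNReal.ofReal (z.1 ^ (p*σ-1)))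
      (g := fun z : ℝ × ℝ => ENNReal.ofReal (h (z.2*z.1) * f z.2 ^ p * (z.2*z.1) ^ ((1-p)*(σ-1)) * z.1 ^ (1-p))) ?_ ?_
    · exact (measurable_fst.pow measurable_const).ennreal_ofReal
    · exact ((((hh.comp (measurable_snd.mul measurable_fst)).mul
        ((hf.comp measurable_snd).pow measurable_const)).mul
        ((measurable_snd.mul measurable_fst).pow measurable_const)).mul
        (measurable_fst.pow measurable_const)).ennreal_ofReal
  -- per-y estimate
  have key : ∀ᵐ y ∂(volume.restrict (Ioi (0:ℝ))),
      K ^ (p-1) * ∫⁻ x in Ioi (0:ℝ), G y x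
        ≤ ENNReal.ofReal (y ^ (p*σ-1)) *
            (∫⁻ x in Ioi (0:ℝ), ENNReal.ofReal (h (x*y) * f x)) ^ p := by
    rw [ae_restrict_iff' measurableSet_Ioi]
    refine Filter.Eventually.of_forall (fun y hy => ?_)
    have hy : (0:ℝ) < y := hy
    have hIy : ∫⁻ x in Ioi (0:ℝ), G y x
        = ENNReal.ofReal (y ^ (p*σ-1)) *
          ∫⁻ x in Ioi (0:ℝ),
            ENNReal.ofReal (h (x*y) * f x ^ p * (x*y) ^ ((1-p)*(σ-1)) * y ^ (1-p)) := by
      rw [hG]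
      exact lintegral_const_mul' _ _ ENNReal.ofReal_ne_top
    rw [hIy, ← mul_assoc, mul_comm (K ^ (p-1)), mul_assoc]
    refine mul_le_mul_right ?_ _
    have hst := step1 p σ hp0 hp1 h f hh hf hh0 hf0 hy
    calc K ^ (p-1) * ∫⁻ x in Ioi (0:ℝ),
          ENNReal.ofReal (h (x*y) * f x ^ p * (x*y) ^ ((1-p)*(σ-1)) * y ^ (1-p))
        ≤ K ^ (p-1) *
            ((∫⁻ x in Ioi (0:ℝ), ENNReal.ofReal (h (x*y) * f x)) ^ p * K ^ (1-p)) :=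
          mul_le_mul_right hst _
      _ = (∫⁻ x in Ioi (0:ℝ), ENNReal.ofReal (h (x*y) * f x)) ^ p *
            (K ^ (p-1) * K ^ (1-p)) := by ring
      _ = (∫⁻ x in Ioi (0:ℝ), ENNReal.ofReal (h (x*y) * f x)) ^ p *
            K ^ ((p-1) + (1-p)) := by rw [ENNReal.rpow_add _ _ hKne0 hKtop]
      _ = (∫⁻ x in Ioi (0:ℝ), ENNReal.ofReal (h (x*y) * f x)) ^ p := by norm_num
  -- inner y-integral for fixed x
  have inner : ∀ x ∈ Ioi (0:ℝ),
      ∫⁻ y in Ioi (0:ℝ), G y x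
        = ENNReal.ofReal (x ^ (p * (1 - σ) - 1) * f x ^ p) * K := by
    intro x hx
    have hx : (0:ℝ) < x := hx
    have hF : 0 ≤ f x := hf0 x hx
    have hcg : ∀ᵐ y ∂(volume : Measure ℝ), y ∈ Ioi (0:ℝ) →
        G y x = ENNReal.ofReal (f x ^ p * x ^ ((1-p)*(σ-1))) *
          ENNReal.ofReal (h (x*y) * y ^ (σ-1)) := by
      refine Filter.Eventually.of_forall (fun y hy => ?_)
      have hy : (0:ℝ) < y := hy
      have hxy : (0:ℝ) < x*y := mul_pos hx hy
      have hH : 0 ≤ h (x*y) := hh0 _ hxy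
      simp only [hG]
      rw [← ENNReal.ofReal_mul (Real.rpow_nonneg hy.le _),
        ← ENNReal.ofReal_mul (mul_nonneg (Real.rpow_nonneg hF _) (Real.rpow_nonneg hx.le _))]
      congr 1
      have ey : y ^ (p*σ-1) * (y ^ ((1-p)*(σ-1)) * y ^ (1-p)) = y ^ (σ-1) := by
        rw [← Real.rpow_add hy, ← Real.rpow_add hy]
        congr 1; ring
      calc y ^ (p*σ-1) * (h (x*y) * f x ^ p * (x*y) ^ ((1-p)*(σ-1)) * y ^ (1-p))
          = y ^ (p*σ-1) * (h (x*y) * f x ^ p *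
              (x ^ ((1-p)*(σ-1)) * y ^ ((1-p)*(σ-1))) * y ^ (1-p)) := by
            rw [Real.mul_rpow hx.le hy.le]
        _ = f x ^ p * x ^ ((1-p)*(σ-1)) * h (x*y) *
              (y ^ (p*σ-1) * (y ^ ((1-p)*(σ-1)) * y ^ (1-p))) := by ring
        _ = f x ^ p * x ^ ((1-p)*(σ-1)) * (h (x*y) * y ^ (σ-1)) := by rw [ey]; ring
    rw [setLIntegral_congr_fun_ae measurableSet_Ioi hcg,
      lintegral_const_mul' _ _ ENNReal.ofReal_ne_top,
      lint_scale_rpow h hh hh0 σ hx, ← hK, ← mul_assoc,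
      ← ENNReal.ofReal_mul (mul_nonneg (Real.rpow_nonneg hF _) (Real.rpow_nonneg hx.le _))]
    congr 2
    rw [mul_assoc, ← Real.rpow_add hx]
    rw [mul_comm]
    congr 1
    ring
  -- main chain
  calc K ^ p * ∫⁻ x in Ioi (0:ℝ), ENNReal.ofReal (x ^ (p * (1 - σ) - 1) * f x ^ p)
      = K ^ (p-1) *
        ((∫⁻ x in Ioi (0:ℝ), ENNReal.ofReal (x ^ (p * (1 - σ) - 1) * f x ^ p)) * K) := by
        have hKsplit : K ^ p = K ^ (p-1) * K := by
          conv_lhs => rw [show p = (p-1)+1 by ring]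
          rw [ENNReal.rpow_add _ _ hKne0 hKtop, ENNReal.rpow_one]
        rw [hKsplit]; ring
    _ = K ^ (p-1) * ∫⁻ x in Ioi (0:ℝ),
          ENNReal.ofReal (x ^ (p * (1 - σ) - 1) * f x ^ p) * K := by
        rw [lintegral_mul_const' _ _ hKtop]
    _ = K ^ (p-1) * ∫⁻ x in Ioi (0:ℝ), ∫⁻ y in Ioi (0:ℝ), G y x := by
        congr 1
        refine (setLIntegral_congr_fun_ae measurableSet_Ioi
          (Filter.Eventually.of_forall (fun x hx => ?_))).symm
        exact inner x hx
    _ = K ^ (p-1) * ∫⁻ y in Ioi (0:ℝ), ∫⁻ x in Ioi (0:ℝ), G y x := by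
        congr 1
        exact (lintegral_lintegral_swap hGmeas.aemeasurable).symm
    _ = ∫⁻ y in Ioi (0:ℝ), K ^ (p-1) * ∫⁻ x in Ioi (0:ℝ), G y x := by
        rw [lintegral_const_mul' _ _ hKp1top]
    _ ≤ ∫⁻ y in Ioi (0:ℝ),
          ENNReal.ofReal (y ^ (p * σ - 1)) *
            (∫⁻ x in Ioi (0:ℝ), ENNReal.ofReal (h (x * y) * f x)) ^ p :=
        lintegral_mono_ae key
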